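/- Let 𝕜 be an RCLike field (ℝ or ℂ) and d ≥ 3. For any two submodules A, B of EuclideanSpace 𝕜 (Fin d) there exists a submodule Z with Z ≠ ⊥, Z ≠ ⊤, C(A, Z) = ⊤, and C(B, Z) = ⊤; that is, every pair of subspaces of 𝕜^d with d ≥ 3 is reducible. -/

import Mathlib

/-- The (lower) commutator `C(X,Y)` of two subspaces of an inner product space. -/
noncomputable def qlCommutator {𝕜 E : Type*} [RCLike 𝕜] [NormedAddCommGroup E]
    [InnerProductSpace 𝕜 E] (X Y : Submodule 𝕜 E) : Submodule 𝕜 E :=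
  (X ⊓ Y) ⊔ (X ⊓ Yᗮ) ⊔ (Xᗮ ⊓ Y) ⊔ (Xᗮ ⊓ Yᗮ)

open Submodule Module

theorem sub_orthogonalProjection_mem_orthogonal {𝕜 E : Type*} [RCLike 𝕜] [NormedAddCommGroup E]
    [InnerProductSpace 𝕜 E] {K : Submodule 𝕜 E} [K.HasOrthogonalProjection] (v : E) :
    v - (orthogonalProjection K v : E) ∈ Kᗮ :=
  K.sub_starProjection_mem_orthogonal v

theorem inner_orthogonalProjection_left_eq_right {𝕜 E : Type*} [RCLike 𝕜] [NormedAddCommGroup E]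
    [InnerProductSpace 𝕜 E] (K : Submodule 𝕜 E) [K.HasOrthogonalProjection] (u v : E) :
    inner 𝕜 (orthogonalProjection K u : E) v = inner 𝕜 u (orthogonalProjection K v : E) :=
  K.inner_starProjection_left_eq_right u v

theorem orthogonalProjection_eq_self_iff {𝕜 E : Type*} [RCLike 𝕜] [NormedAddCommGroup E]
    [InnerProductSpace 𝕜 E] {K : Submodule 𝕜 E} [K.HasOrthogonalProjection] {v : E} :
    (orthogonalProjection K v : E) = v ↔ v ∈ K :=
  K.starProjection_eq_self_iff

/-- If `Z` is invariant under the orthogonal projection onto `X`, then `C(X,Z) = ⊤`. -/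
lemma qlCommutator_eq_top_of_invariant {𝕜 E : Type*} [RCLike 𝕜] [NormedAddCommGroup E]
    [InnerProductSpace 𝕜 E] [FiniteDimensional 𝕜 E] (X Z : Submodule 𝕜 E)
    (h : ∀ z ∈ Z, (orthogonalProjection X z : E) ∈ Z) : qlCommutator X Z = ⊤ := by
  have hXZ : X ⊓ Z ≤ qlCommutator X Z := by
    unfold qlCommutator
    exact le_sup_of_le_left (le_sup_of_le_left le_sup_left)
  have hXZ' : X ⊓ Zᗮ ≤ qlCommutator X Z := by
    unfold qlCommutator
    exact le_sup_of_le_left (le_sup_of_le_left le_sup_right)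
  have hXcZ : Xᗮ ⊓ Z ≤ qlCommutator X Z := by
    unfold qlCommutator
    exact le_sup_of_le_left le_sup_right
  have hXcZ' : Xᗮ ⊓ Zᗮ ≤ qlCommutator X Z := le_sup_right
  have hZ : Z ≤ qlCommutator X Z := by
    intro z hz
    have h1 : (orthogonalProjection X z : E) ∈ X ⊓ Z := ⟨SetLike.coe_mem _, h z hz⟩
    have h2 : z - (orthogonalProjection X z : E) ∈ Xᗮ ⊓ Z :=
      ⟨sub_orthogonalProjection_mem_orthogonal z, Z.sub_mem hz (h z hz)⟩
    have : z = (orthogonalProjection X z : E) + (z - (orthogonalProjection X z : E)) := by abel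
    rw [this]
    exact (qlCommutator X Z).add_mem (hXZ h1) (hXcZ h2)
  have hinv' : ∀ u ∈ Zᗮ, (orthogonalProjection X u : E) ∈ Zᗮ := by
    intro u hu
    rw [Submodule.mem_orthogonal]
    intro z hz
    have : inner (𝕜 := 𝕜) (orthogonalProjection X u : E) z
        = inner (𝕜 := 𝕜) u (orthogonalProjection X z : E) :=
      inner_orthogonalProjection_left_eq_right X u z
    have hz' : inner (𝕜 := 𝕜) u (orthogonalProjection X z : E) = 0 :=
      (Submodule.mem_orthogonal' Z u).mp hu _ (h z hz)
    rw [← inner_conj_symm, this, hz', map_zero]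
  have hZ' : Zᗮ ≤ qlCommutator X Z := by
    intro u hu
    have h1 : (orthogonalProjection X u : E) ∈ X ⊓ Zᗮ := ⟨SetLike.coe_mem _, hinv' u hu⟩
    have h2 : u - (orthogonalProjection X u : E) ∈ Xᗮ ⊓ Zᗮ :=
      ⟨sub_orthogonalProjection_mem_orthogonal u, Zᗮ.sub_mem hu (hinv' u hu)⟩
    have : u = (orthogonalProjection X u : E) + (u - (orthogonalProjection X u : E)) := by abel
    rw [this]
    exact (qlCommutator X Z).add_mem (hXZ' h1) (hXcZ' h2)
  rw [eq_top_iff, ← Submodule.sup_orthogonal_of_hasOrthogonalProjection (K := Z)]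
  exact sup_le hZ hZ'

/-- Given `A ≠ ⊥`, there is a small nonzero subspace invariant under both projections. -/
lemma exists_small_invariant {𝕜 E : Type*} [RCLike 𝕜] [NormedAddCommGroup E]
    [InnerProductSpace 𝕜 E] [FiniteDimensional 𝕜 E] (A B : Submodule 𝕜 E) (hA : A ≠ ⊥) :
    ∃ Z : Submodule 𝕜 E, Z ≠ ⊥ ∧ finrank 𝕜 Z ≤ 2 ∧
      (∀ z ∈ Z, (orthogonalProjection A z : E) ∈ Z) ∧
      (∀ z ∈ Z, (orthogonalProjection B z : E) ∈ Z) := by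
  haveI : Nontrivial A := Submodule.nontrivial_iff_ne_bot.mpr hA
  -- the symmetric operator `x ↦ P_A (P_B x)` on `A`
  set T : A →ₗ[𝕜] A :=
    { toFun := fun x => orthogonalProjection A ((orthogonalProjection B (x : E) : E)),
      map_add' := by intro x y; simp
      map_smul' := by intro c x; simp } with hT
  have hsymm : T.IsSymmetric := by
    intro x y
    have hx : (orthogonalProjection A (x : E) : E) = (x : E) :=
      orthogonalProjection_eq_self_iff.mpr x.2
    have hy : (orthogonalProjection A (y : E) : E) = (y : E) :=
      orthogonalProjection_eq_self_iff.mpr y.2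
    show inner (𝕜 := 𝕜) ((T x : A) : E) ((y : A) : E) = inner (𝕜 := 𝕜) ((x : A) : E) ((T y : A) : E)
    have h1 : inner (𝕜 := 𝕜) ((T x : A) : E) ((y : A) : E)
        = inner (𝕜 := 𝕜) ((orthogonalProjection B (x : E) : E)) ((y : A) : E) := by
      simp only [hT, LinearMap.coe_mk, AddHom.coe_mk]
      change inner 𝕜 (orthogonalProjection A (orthogonalProjection B (x : E) : E) : E) (y : E) = _
      rw [inner_orthogonalProjection_left_eq_right, hy]
    have h2 : inner (𝕜 := 𝕜) ((x : A) : E) ((T y : A) : E)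
        = inner (𝕜 := 𝕜) ((x : A) : E) ((orthogonalProjection B (y : E) : E)) := by
      simp only [hT, LinearMap.coe_mk, AddHom.coe_mk]
      change inner 𝕜 (x : E) (orthogonalProjection A (orthogonalProjection B (y : E) : E) : E) = _
      rw [← inner_orthogonalProjection_left_eq_right, hx]
    rw [h1, h2, inner_orthogonalProjection_left_eq_right]
  obtain ⟨μ, hμ⟩ : ∃ μ : 𝕜, Module.End.HasEigenvalue T μ :=
    ⟨_, hsymm.hasEigenvalue_iSup_of_finiteDimensional⟩
  obtain ⟨v, hv⟩ := hμ.exists_hasEigenvector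
  have hv0 : (v : E) ≠ 0 := fun h => hv.right (Subtype.ext h)
  have hTv : ((T v : A) : E) = μ • (v : E) := by
    rw [hv.apply_eq_smul]; simp
  set w : E := (orthogonalProjection B (v : E) : E) with hw
  set Z : Submodule 𝕜 E := Submodule.span 𝕜 {(v : E), w} with hZ
  have hvZ : (v : E) ∈ Z := Submodule.subset_span (by simp)
  have hwZ : w ∈ Z := Submodule.subset_span (by simp)
  haveI := Classical.decEq E
  refine ⟨Z, ?_, ?_, ?_, ?_⟩
  · intro h
    rw [h] at hvZ
    exact hv0 hvZ
  · have h1 : finrank 𝕜 Z ≤ ({(v : E), w} : Set E).toFinset.card :=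
      finrank_span_le_card _
    refine h1.trans ?_
    rw [Set.toFinset_insert, Set.toFinset_singleton]
    exact (Finset.card_insert_le _ _).trans (by simp)
  · -- invariance under P_A
    intro z hz
    induction hz using Submodule.span_induction with
    | mem x hx =>
      rcases hx with hx | hx
      · rw [hx, orthogonalProjection_eq_self_iff.mpr v.2]
        exact hvZ
      · simp only [Set.mem_singleton_iff] at hx
        rw [hx]
        have : (orthogonalProjection A w : E) = μ • (v : E) := by
          rw [← hTv]
          simp [hT, hw]
        rw [this]
        exact Z.smul_mem μ hvZ
    | zero => simp
    | add x y _ _ hx hy => rw [map_add]; exact Z.add_mem hx hy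
    | smul c x _ hx => rw [map_smul]; exact Z.smul_mem c hx
  · -- invariance under P_B
    intro z hz
    induction hz using Submodule.span_induction with
    | mem x hx =>
      rcases hx with hx | hx
      · rw [hx]; exact hwZ
      · simp only [Set.mem_singleton_iff] at hx
        rw [hx, orthogonalProjection_eq_self_iff.mpr (SetLike.coe_mem _)]
        exact hwZ
    | zero => simp
    | add x y _ _ hx hy => rw [map_add]; exact Z.add_mem hx hy
    | smul c x _ hx => rw [map_smul]; exact Z.smul_mem c hx

theorem pair_reducible_of_three_le_dim {𝕜 : Type*} [RCLike 𝕜] {d : ℕ} (hd : 3 ≤ d)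
    (A B : Submodule 𝕜 (EuclideanSpace 𝕜 (Fin d))) :
    ∃ Z : Submodule 𝕜 (EuclideanSpace 𝕜 (Fin d)),
      Z ≠ ⊥ ∧ Z ≠ ⊤ ∧ qlCommutator A Z = ⊤ ∧ qlCommutator B Z = ⊤ := by
  have hdim : finrank 𝕜 (EuclideanSpace 𝕜 (Fin d)) = d := by
    simp [finrank_euclideanSpace]
  have hne_top : ∀ Z : Submodule 𝕜 (EuclideanSpace 𝕜 (Fin d)), finrank 𝕜 Z ≤ 2 → Z ≠ ⊤ := by
    intro Z hZ h
    rw [h, finrank_top, hdim] at hZ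
    omega
  by_cases hA : A = ⊥
  · by_cases hB : B = ⊥
    · -- both trivial: any small subspace works
      subst hA hB
      have : Nontrivial (EuclideanSpace 𝕜 (Fin d)) :=
        Module.nontrivial_of_finrank_pos (R := 𝕜) (by rw [hdim]; omega)
      obtain ⟨v, hv⟩ := exists_ne (0 : EuclideanSpace 𝕜 (Fin d))
      refine ⟨Submodule.span 𝕜 {v}, ?_, ?_, ?_, ?_⟩
      · simpa using hv
      · refine hne_top _ ?_
        have h1 : finrank 𝕜 (Submodule.span 𝕜 {v}) ≤ ({v} : Set _).toFinset.card :=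
          finrank_span_le_card _
        refine h1.trans ?_
        simp
      · apply qlCommutator_eq_top_of_invariant
        intro z hz
        simp [orthogonalProjection_bot]
      · apply qlCommutator_eq_top_of_invariant
        intro z hz
        simp [orthogonalProjection_bot]
    · obtain ⟨Z, h1, h2, h3, h4⟩ := exists_small_invariant B A hB
      exact ⟨Z, h1, hne_top Z h2, qlCommutator_eq_top_of_invariant A Z h4,
        qlCommutator_eq_top_of_invariant B Z h3⟩
  · obtain ⟨Z, h1, h2, h3, h4⟩ := exists_small_invariant A B hA
    exact ⟨Z, h1, hne_top Z h2, qlCommutator_eq_top_of_invariant A Z h3,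
      qlCommutator_eq_top_of_invariant B Z h4⟩
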